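/- Let E be a vector lattice with the principal projection property, F a Dedekind complete vector lattice, Φ : 𝔅(E) → 𝔅(F) a Boolean homomorphism, T : E → F a positive orthogonally additive operator, and set R(T)(x) := inf { Σᵢ Φ(πᵢ)(T(πᵢ x)) : (πᵢ) ∈ 𝔇₀ }. Then R(T) = T if and only if T is atomic subordinate to Φ. -/

import Mathlib

namespace VL

set_option linter.unusedSectionVars false

/-- Two elements of a vector lattice are disjoint if `|x| ⊓ |y| = 0`. -/
def VDisjoint {G : Type*} [Lattice G] [AddCommGroup G] (x y : G) : Prop :=
  |x| ⊓ |y| = 0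

/-- `y` is a fragment of `x` if `y ⊥ (x - y)`. -/
def Fragment {G : Type*} [Lattice G] [AddCommGroup G] (y x : G) : Prop :=
  VDisjoint y (x - y)

/-- An order projection: a linear idempotent `π` with `0 ≤ π x ≤ x` for all `x ≥ 0`. -/
def IsOrderProjection {G : Type*} [Lattice G] [AddCommGroup G] [Module ℝ G]
    (π : G →ₗ[ℝ] G) : Prop :=
  (∀ x, π (π x) = π x) ∧ ∀ x : G, 0 ≤ x → 0 ≤ π x ∧ π x ≤ x

/-- A map between the order projections of `E` and of `F` is a Boolean homomorphism if it
maps order projections to order projections and preserves the Boolean operations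
`π ∧ ρ = π ∘ ρ`, `π ∨ ρ = π + ρ - π ∘ ρ` and `compl π = Id - π`. -/
def IsBooleanHom {E F : Type*} [Lattice E] [AddCommGroup E] [Module ℝ E]
    [Lattice F] [AddCommGroup F] [Module ℝ F]
    (Φ : (E →ₗ[ℝ] E) → (F →ₗ[ℝ] F)) : Prop :=
  (∀ π, IsOrderProjection π → IsOrderProjection (Φ π)) ∧
  (∀ π ρ, IsOrderProjection π → IsOrderProjection ρ →
    Φ (π ∘ₗ ρ) = Φ π ∘ₗ Φ ρ) ∧
  (∀ π ρ, IsOrderProjection π → IsOrderProjection ρ →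
    Φ (π + ρ - π ∘ₗ ρ) = Φ π + Φ ρ - Φ π ∘ₗ Φ ρ) ∧
  (∀ π, IsOrderProjection π → Φ (LinearMap.id - π) = LinearMap.id - Φ π)

/-- `T` is atomic subordinate to `Φ` if `T (π x) = Φ(π) (T x)` for every order projection. -/
def IsAtomic {E F : Type*} [Lattice E] [AddCommGroup E] [Module ℝ E]
    [Lattice F] [AddCommGroup F] [Module ℝ F]
    (Φ : (E →ₗ[ℝ] E) → (F →ₗ[ℝ] F)) (T : E → F) : Prop :=
  ∀ π : E →ₗ[ℝ] E, IsOrderProjection π → ∀ x : E, T (π x) = Φ π (T x)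

/-- The principal projection property: for every `x` there is an order projection `π_x`
(the projection onto the band generated by `x`) such that `z - π_x z ⊥ x` for all `z`,
and `π_x z ⊥ w` whenever `w ⊥ x`. -/
def HasPPP (E : Type*) [Lattice E] [AddCommGroup E] [Module ℝ E] : Prop :=
  ∀ x : E, ∃ π : E →ₗ[ℝ] E, IsOrderProjection π ∧
    (∀ z : E, VDisjoint (z - π z) x) ∧
    (∀ z w : E, VDisjoint w x → VDisjoint (π z) w)

/-- Dedekind completeness: every nonempty set bounded above has a supremum. -/
def DedekindComplete (F : Type*) [Lattice F] : Prop :=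
  ∀ S : Set F, S.Nonempty → BddAbove S → ∃ b, IsLUB S b

section Aux
variable {G : Type*} [Lattice G] [AddCommGroup G] [Module ℝ G]
  [CovariantClass G G (· + ·) (· ≤ ·)]

/-- A local ordered-group structure derived from the lattice + covariance hypotheses. -/
def ordInst (G : Type*) [Lattice G] [AddCommGroup G] [CovariantClass G G (· + ·) (· ≤ ·)] :
    IsOrderedAddMonoid G :=
  { add_le_add_left := fun _ _ h c => add_le_add h (le_refl c) }

lemma IsOrderProjection.mono {π : G →ₗ[ℝ] G} (h : IsOrderProjection π)
    {a b : G} (hab : a ≤ b) : π a ≤ π b := by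
  have h0 : 0 ≤ π (b - a) := (h.2 (b - a) (sub_nonneg.2 hab)).1
  rw [map_sub] at h0
  exact sub_nonneg.mp h0

lemma proj_id : IsOrderProjection (LinearMap.id : G →ₗ[ℝ] G) :=
  ⟨fun _ => rfl, fun x hx => ⟨hx, le_refl x⟩⟩

lemma proj_zero : IsOrderProjection (0 : G →ₗ[ℝ] G) := by
  refine ⟨fun x => ?_, fun x hx => ⟨le_refl 0, hx⟩⟩
  simp

lemma proj_compl {π : G →ₗ[ℝ] G} (h : IsOrderProjection π) :
    IsOrderProjection (LinearMap.id - π) := by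
  constructor
  · intro x
    simp only [LinearMap.sub_apply, LinearMap.id_apply, map_sub, h.1]
    abel
  · intro x hx
    simp only [LinearMap.sub_apply, LinearMap.id_apply]
    exact ⟨sub_nonneg.2 (h.2 x hx).2, sub_le_self x (h.2 x hx).1⟩

lemma proj_disj_pos {π : G →ₗ[ℝ] G} (h : IsOrderProjection π)
    {x : G} (hx : 0 ≤ x) : π x ⊓ (x - π x) = 0 := by
  set w := π x ⊓ (x - π x) with hw
  have hw0 : 0 ≤ w := le_inf (h.2 x hx).1 (sub_nonneg.2 (h.2 x hx).2)
  have h1 : π w ≤ 0 := by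
    have := h.mono (inf_le_right (a := π x) (b := x - π x))
    rwa [map_sub, h.1, sub_self] at this
  have h2 : w - π w ≤ 0 := by
    have := (proj_compl h).mono (inf_le_left (a := π x) (b := x - π x))
    simp only [LinearMap.sub_apply, LinearMap.id_apply, h.1, sub_self] at this
    exact this
  have : w ≤ 0 := by
    have := add_le_add h1 h2
    rwa [add_sub_cancel, add_zero] at this
  exact le_antisymm this hw0

lemma negAbsLe (a : G) : -|a| ≤ a := neg_le_of_neg_le (neg_le_abs a)

lemma proj_disj {π : G →ₗ[ℝ] G} (h : IsOrderProjection π) (x : G) :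
    VDisjoint (π x) (x - π x) := by
  have ha : |π x| ≤ π |x| := by
    have h1 : π x ≤ π |x| := h.mono (le_abs_self x)
    have h2 : -(π x) ≤ π |x| := by
      have := h.mono (negAbsLe x)
      rw [map_neg] at this
      exact neg_le_of_neg_le this
    exact abs_le'.mpr ⟨h1, h2⟩
  have hb : |x - π x| ≤ |x| - π |x| := by
    have h1 : x - π x ≤ |x| - π |x| := by
      have := (proj_compl h).mono (le_abs_self x)
      simpa only [LinearMap.sub_apply, LinearMap.id_apply] using this
    have h2 : -(x - π x) ≤ |x| - π |x| := by
      have := (proj_compl h).mono (negAbsLe x)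
      simp only [LinearMap.sub_apply, LinearMap.id_apply, map_neg] at this
      exact neg_le_of_neg_le this
    exact abs_le'.mpr ⟨h1, h2⟩
  have hle : |π x| ⊓ |x - π x| ≤ 0 := by
    calc |π x| ⊓ |x - π x| ≤ π |x| ⊓ (|x| - π |x|) := inf_le_inf ha hb
    _ = 0 := proj_disj_pos h (abs_nonneg x)
  exact le_antisymm hle (le_inf (abs_nonneg _) (abs_nonneg _))

end Aux

variable {E F : Type*}
  [Lattice E] [AddCommGroup E] [Module ℝ E]
  [CovariantClass E E (· + ·) (· ≤ ·)] [PosSMulMono ℝ E]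
  [Lattice F] [AddCommGroup F] [Module ℝ F]
  [CovariantClass F F (· + ·) (· ≤ ·)] [PosSMulMono ℝ F]

/-- A finite partition of the identity: finitely many pairwise disjoint order projections
summing to the identity. -/
def IsPartitionOfIdentity {E : Type*} [Lattice E] [AddCommGroup E] [Module ℝ E]
    {n : ℕ} (π : Fin n → E →ₗ[ℝ] E) : Prop :=
  (∀ i, IsOrderProjection (π i)) ∧
  (∀ i j, i ≠ j → (π i) ∘ₗ (π j) = 0) ∧
  (∑ i, π i) = LinearMap.id

/-- The set `{ Σᵢ Φ(πᵢ)(T(πᵢ x)) : (πᵢ) ∈ 𝔇₀ }` of values at `x` of the operators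
associated to finite partitions of the identity. -/
def atomicSumSet (Φ : (E →ₗ[ℝ] E) → (F →ₗ[ℝ] F)) (T : E → F) (x : E) : Set F :=
  {w : F | ∃ (n : ℕ) (π : Fin n → E →ₗ[ℝ] E), IsPartitionOfIdentity π ∧
    w = ∑ i, Φ (π i) (T (π i x))}

section Part
variable {G : Type*} [Lattice G] [AddCommGroup G] [Module ℝ G]
  [CovariantClass G G (· + ·) (· ≤ ·)]

lemma partition_sum_proj {n : ℕ} {π : Fin n → G →ₗ[ℝ] G}
    (hp : IsPartitionOfIdentity π) (S : Finset (Fin n)) :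
    IsOrderProjection (∑ i ∈ S, π i) := by
  letI := ordInst G
  constructor
  · intro x
    rw [LinearMap.sum_apply, LinearMap.sum_apply]
    refine Finset.sum_congr rfl fun i hi => ?_
    rw [map_sum]
    refine (Finset.sum_eq_single_of_mem i hi fun j hj hji => ?_).trans ((hp.1 i).1 x)
    have h0 : (π i) ∘ₗ (π j) = 0 := hp.2.1 i j (Ne.symm hji)
    calc (π i) ((π j) x) = ((π i) ∘ₗ (π j)) x := rfl
    _ = 0 := by rw [h0]; rfl
  · intro x hx
    rw [LinearMap.sum_apply]
    constructor
    · exact Finset.sum_nonneg fun i _ => ((hp.1 i).2 x hx).1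
    · have hle : ∑ i ∈ S, π i x ≤ ∑ i, π i x :=
        Finset.sum_le_sum_of_subset_of_nonneg (Finset.subset_univ S)
          fun i _ _ => ((hp.1 i).2 x hx).1
      have h2 : ∑ i, π i x = x := by rw [← LinearMap.sum_apply, hp.2.2]; rfl
      rwa [h2] at hle

end Part

lemma bh_zero {Φ : (E →ₗ[ℝ] E) → (F →ₗ[ℝ] F)} (hΦ : IsBooleanHom Φ) : Φ 0 = 0 := by
  have h0 : IsOrderProjection (0 : E →ₗ[ℝ] E) := proj_zero
  have hid : IsOrderProjection (LinearMap.id : E →ₗ[ℝ] E) := proj_id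
  have hA : Φ 0 = LinearMap.id - Φ LinearMap.id := by
    have h := hΦ.2.2.2 LinearMap.id hid
    rwa [sub_self] at h
  have h1 : Φ LinearMap.id = LinearMap.id - Φ 0 := by rw [hA]; abel
  have hB : Φ 0 = Φ 0 ∘ₗ (LinearMap.id - Φ 0) := by
    have h := hΦ.2.1 0 LinearMap.id h0 hid
    rwa [LinearMap.zero_comp, h1] at h
  have hpr := (hΦ.1 0 h0).1
  refine LinearMap.ext fun y => ?_
  have hy := congrArg (fun f : F →ₗ[ℝ] F => f y) hB
  simp only [LinearMap.comp_apply, LinearMap.sub_apply, LinearMap.id_apply, map_sub] at hy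
  rw [hpr y, sub_self] at hy
  simpa using hy

lemma bh_id {Φ : (E →ₗ[ℝ] E) → (F →ₗ[ℝ] F)} (hΦ : IsBooleanHom Φ) :
    Φ LinearMap.id = LinearMap.id := by
  have h := hΦ.2.2.2 0 proj_zero
  rwa [sub_zero, bh_zero hΦ, sub_zero] at h

lemma bh_sum {Φ : (E →ₗ[ℝ] E) → (F →ₗ[ℝ] F)} (hΦ : IsBooleanHom Φ)
    {n : ℕ} {π : Fin n → E →ₗ[ℝ] E} (hp : IsPartitionOfIdentity π)
    (S : Finset (Fin n)) : Φ (∑ i ∈ S, π i) = ∑ i ∈ S, Φ (π i) := by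
  classical
  refine Finset.induction_on S ?_ ?_
  · simpa using bh_zero hΦ
  · intro a S ha ih
    have hσ : IsOrderProjection (∑ i ∈ S, π i) := partition_sum_proj hp S
    have hπa := hp.1 a
    have hdisj : (π a) ∘ₗ (∑ i ∈ S, π i) = 0 := by
      refine LinearMap.ext fun x => ?_
      simp only [LinearMap.comp_apply, LinearMap.sum_apply, map_sum, LinearMap.zero_apply]
      refine Finset.sum_eq_zero fun j hj => ?_
      have h0 : (π a) ∘ₗ (π j) = 0 := hp.2.1 a j (by rintro rfl; exact ha hj)
      calc (π a) ((π j) x) = ((π a) ∘ₗ (π j)) x := rfl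
      _ = 0 := by rw [h0]; rfl
    have hcomp := hΦ.2.1 (π a) (∑ i ∈ S, π i) hπa hσ
    rw [hdisj, bh_zero hΦ] at hcomp
    have hjoin := hΦ.2.2.1 (π a) (∑ i ∈ S, π i) hπa hσ
    rw [hdisj, sub_zero, ← hcomp, sub_zero] at hjoin
    rw [Finset.sum_insert ha, hjoin, ih, Finset.sum_insert ha]

/-- `R(T) = T` if and only if `T` is atomic subordinate to `Φ`. -/
theorem atomic_projection_fixed_points
    (hE : HasPPP E) (hF : DedekindComplete F)
    (Φ : (E →ₗ[ℝ] E) → (F →ₗ[ℝ] F)) (hΦ : IsBooleanHom Φ)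
    (T : E → F) (hTpos : ∀ x : E, 0 ≤ T x)
    (hToa : ∀ x y : E, VDisjoint x y → T (x + y) = T x + T y)
    (R : E → F) (hR : ∀ x : E, IsGLB (atomicSumSet Φ T x) (R x)) :
    (∀ x : E, R x = T x) ↔ IsAtomic Φ T := by
  constructor
  · intro hRT π hπ x
    have c1 : π ∘ₗ (LinearMap.id - π) = 0 := by
      refine LinearMap.ext fun y => ?_
      simp only [LinearMap.comp_apply, LinearMap.sub_apply, LinearMap.id_apply, map_sub,
        LinearMap.zero_apply, hπ.1, sub_self]
    have c2 : (LinearMap.id - π) ∘ₗ π = 0 := by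
      refine LinearMap.ext fun y => ?_
      simp only [LinearMap.comp_apply, LinearMap.sub_apply, LinearMap.id_apply,
        LinearMap.zero_apply, hπ.1, sub_self]
    have hp : IsPartitionOfIdentity (![π, LinearMap.id - π]) := by
      refine ⟨?_, ?_, ?_⟩
      · intro i; fin_cases i
        · exact hπ
        · exact proj_compl hπ
      · intro i j hij
        fin_cases i <;> fin_cases j <;> simp_all [c1, c2]
      · rw [Fin.sum_univ_two]
        show π + (LinearMap.id - π) = LinearMap.id
        abel
    have hw : Φ π (T (π x)) + (T (x - π x) - Φ π (T (x - π x))) ∈ atomicSumSet Φ T x := by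
      refine ⟨2, ![π, LinearMap.id - π], hp, ?_⟩
      rw [Fin.sum_univ_two]
      simp only [Matrix.cons_val_zero, Matrix.cons_val_one, Matrix.head_cons,
        hΦ.2.2.2 π hπ, LinearMap.sub_apply, LinearMap.id_apply]
    have hle : T x ≤ Φ π (T (π x)) + (T (x - π x) - Φ π (T (x - π x))) := by
      have h := (hR x).1 hw
      rwa [hRT x] at h
    have hΦπ : IsOrderProjection (Φ π) := hΦ.1 π hπ
    have hxsum : π x + (x - π x) = x := by abel
    have hsplit : T x = T (π x) + T (x - π x) := by
      conv_lhs => rw [← hxsum]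
      exact hToa _ _ (proj_disj hπ x)
    rw [hsplit] at hle
    have e2 : Φ π (Φ π (T (π x)) + (T (x - π x) - Φ π (T (x - π x)))) = Φ π (T (π x)) := by
      rw [map_add, map_sub, hΦπ.1, hΦπ.1, sub_self, add_zero]
    have hPb : Φ π (T (x - π x)) ≤ 0 := by
      have h3 := hΦπ.mono hle
      rw [map_add, e2] at h3
      exact (add_le_iff_nonpos_right _).1 h3
    have key1 : Φ π (T (x - π x)) = 0 :=
      le_antisymm hPb (hΦπ.2 _ (hTpos _)).1
    have hQ := proj_compl hΦπ
    have h4 := hQ.mono hle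
    have f1 : (LinearMap.id - Φ π : F →ₗ[ℝ] F) (T (π x) + T (x - π x))
        = (T (π x) - Φ π (T (π x))) + (T (x - π x) - Φ π (T (x - π x))) := by
      simp only [LinearMap.sub_apply, LinearMap.id_apply, map_add]
      try abel
    have f2 : (LinearMap.id - Φ π : F →ₗ[ℝ] F) (Φ π (T (π x)) + (T (x - π x) - Φ π (T (x - π x))))
        = T (x - π x) - Φ π (T (x - π x)) := by
      simp only [LinearMap.sub_apply, LinearMap.id_apply, map_add, map_sub, hΦπ.1]
      try abel
    rw [f1, f2] at h4
    have hPa_le : T (π x) - Φ π (T (π x)) ≤ 0 :=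
      le_of_add_le_add_right (h4.trans_eq (zero_add _).symm)
    have hPa_ge : 0 ≤ T (π x) - Φ π (T (π x)) := by
      have := (hQ.2 (T (π x)) (hTpos _)).1
      simpa only [LinearMap.sub_apply, LinearMap.id_apply] using this
    have hPa : T (π x) = Φ π (T (π x)) :=
      sub_eq_zero.1 (le_antisymm hPa_le hPa_ge)
    calc T (π x) = Φ π (T (π x)) := hPa
    _ = Φ π (T (π x)) + Φ π (T (x - π x)) := by rw [key1, add_zero]
    _ = Φ π (T (π x) + T (x - π x)) := (map_add _ _ _).symm
    _ = Φ π (T x) := by rw [← hsplit]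
  · intro hA x
    have hmem : T x ∈ atomicSumSet Φ T x := by
      refine ⟨1, fun _ => LinearMap.id,
        ⟨fun _ => proj_id, fun i j hij => absurd (Subsingleton.elim i j) hij, by simp⟩, ?_⟩
      simp [bh_id hΦ]
    have hall : ∀ w ∈ atomicSumSet Φ T x, w = T x := by
      rintro w ⟨n, π, hp, rfl⟩
      have hstep : ∑ i, Φ (π i) (T (π i x)) = ∑ i, Φ (π i) (T x) := by
        refine Finset.sum_congr rfl fun i _ => ?_
        rw [hA (π i) (hp.1 i) x, (hΦ.1 (π i) (hp.1 i)).1]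
      calc ∑ i, Φ (π i) (T (π i x)) = ∑ i, Φ (π i) (T x) := hstep
      _ = (∑ i, Φ (π i)) (T x) := by rw [LinearMap.sum_apply]
      _ = Φ (∑ i, π i) (T x) := by rw [bh_sum hΦ hp Finset.univ]
      _ = T x := by rw [hp.2.2, bh_id hΦ]; rfl
    exact (hR x).unique ⟨fun w hw => (hall w hw).ge, fun b hb => hb hmem⟩

end VL
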